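/- Let (Ω, ℱ, P) be a probability space, C ≥ 1, v ∈ [0,1], ε > 0, and let (s(n))_{n≥1} and (w(n))_{n≥1} be random variables such that: the family {s(n), w(n) : n ∈ ℕ} is mutually independent; s(n) ∈ [0,1] and w(n) ∈ [1,C] almost surely for all n; and E[|s(n) − v|] ≤ ε/2 for all n. Then almost surely limsup_{n→∞} |s̄(n) − s̃(n)| ≤ ε, where s̄(n) = (1/n) ∑_{m=1}^n s(m) and s̃(n) = (∑_{m=1}^n w(m) s(m)) / (∑_{m=1}^n w(m)). (Example 11, part 1: a sufficient condition for ε-unbiased payoff observations; the weights arising from SM-MCTS always satisfy w ≥ 1, which also makes the weighted average well defined.) -/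

import Mathlib

open Finset Filter MeasureTheory ProbabilityTheory Topology

lemma slln_bdd {Ω : Type*} [MeasurableSpace Ω] (P : Measure Ω) [IsProbabilityMeasure P]
    (X : ℕ → Ω → ℝ) (M : ℝ)
    (hmeas : ∀ n, Measurable (X n))
    (hindep : ∀ i j, i ≠ j → IndepFun (X i) (X j) P)
    (hbd : ∀ n, ∀ᵐ ω ∂P, |X n ω| ≤ M) :
    ∀ᵐ ω ∂P, Tendsto (fun n : ℕ =>
      (∑ m ∈ Finset.range n, (X m ω - ∫ ω', X m ω' ∂P)) / n) atTop (𝓝 0) := by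
  have hM : 0 ≤ M := by
    have := (hbd 0).exists
    obtain ⟨ω, hω⟩ := this
    exact le_trans (abs_nonneg _) hω
  have hmem : ∀ n, MemLp (X n) 2 P := fun n =>
    MemLp.of_bound (hmeas n).aestronglyMeasurable M
      ((hbd n).mono fun ω h => by simpa [Real.norm_eq_abs] using h)
  have hint : ∀ n, Integrable (X n) P := fun n => (hmem n).integrable one_le_two
  set μ : ℕ → ℝ := fun n => ∫ ω, X n ω ∂P with hμdef
  have hμbd : ∀ n, |μ n| ≤ M := fun n => by
    calc |μ n| ≤ ∫ ω, |X n ω| ∂P := by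
          simpa [Real.norm_eq_abs] using norm_integral_le_integral_norm (μ := P) (X n)
      _ ≤ ∫ _ω, M ∂P := integral_mono_ae (hint n).abs (integrable_const M) (hbd n)
      _ = M := by simp
  have hvar : ∀ n, variance (X n) P ≤ M ^ 2 := fun n => by
    refine (variance_le_expectation_sq (hmeas n).aestronglyMeasurable).trans ?_
    have : (∫ ω, (X n ω) ^ 2 ∂P) ≤ ∫ _ω, M ^ 2 ∂P := by
      refine integral_mono_ae ?_ (integrable_const _) ((hbd n).mono fun ω h => by
        have h2 := abs_le.1 h
        show X n ω ^ 2 ≤ M ^ 2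
        nlinarith [h2.1, h2.2])
      simpa [Pi.pow_apply] using (hmem n).integrable_sq
    simpa [Pi.pow_apply] using this
  -- variance of partial sums
  have hvarsum : ∀ n : ℕ, variance (∑ m ∈ Finset.range n, X m) P ≤ n * M ^ 2 := by
    intro n
    rw [IndepFun.variance_sum (fun i _ => hmem i)
      (fun i _ j _ hij => hindep i j hij)]
    calc ∑ m ∈ Finset.range n, variance (X m) P ≤ ∑ _m ∈ Finset.range n, M ^ 2 :=
          Finset.sum_le_sum fun i _ => hvar i
      _ = n * M ^ 2 := by simp [mul_comm]
  have hTint : ∀ n : ℕ, (∫ ω, (∑ m ∈ Finset.range n, X m) ω ∂P) = ∑ m ∈ Finset.range n, μ m := by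
    intro n
    simp only [Finset.sum_apply]
    exact integral_finset_sum _ fun i _ => hint i
  -- Borel-Cantelli along squares
  have key : ∀ δ : ℝ, 0 < δ → ∀ᵐ ω ∂P, ∀ᶠ k : ℕ in atTop,
      |∑ m ∈ Finset.range (k * k), (X m ω - μ m)| < δ * (k * k) := by
    intro δ hδ
    set T : ℕ → Ω → ℝ := fun n => ∑ m ∈ Finset.range n, X m with hT
    set Sset : ℕ → Set Ω := fun k =>
      {ω | δ * (((k : ℝ) + 1) * ((k : ℝ) + 1)) ≤ |T ((k+1)*(k+1)) ω - P[T ((k+1)*(k+1))]|}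
      with hSset
    have hmeasbd : ∀ k : ℕ, P (Sset k) ≤ ENNReal.ofReal (M ^ 2 / δ ^ 2 * (1 / ((k : ℝ) + 1) ^ 2)) := by
      intro k
      have hr : (0 : ℝ) < (k : ℝ) + 1 := by positivity
      have hc : (0 : ℝ) < δ * (((k : ℝ) + 1) * ((k : ℝ) + 1)) := by positivity
      refine le_trans (meas_ge_le_variance_div_sq (memLp_finset_sum' _ fun i _ => hmem i) hc)
        (ENNReal.ofReal_le_ofReal ?_)
      rw [div_le_iff₀ (by positivity)]
      have h1 : variance (T ((k+1)*(k+1))) P ≤ (((k : ℝ) + 1) * ((k : ℝ) + 1)) * M ^ 2 := by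
        have h2 := hvarsum ((k+1)*(k+1))
        refine le_trans h2 (le_of_eq ?_)
        push_cast
        ring
      refine h1.trans (le_of_eq ?_)
      field_simp
    have hsummable : Summable (fun k : ℕ => M ^ 2 / δ ^ 2 * (1 / ((k : ℝ) + 1) ^ 2)) := by
      apply Summable.mul_left
      have : Summable (fun n : ℕ => 1 / ((n : ℝ)) ^ 2) := Real.summable_one_div_nat_pow.2 one_lt_two
      have := (summable_nat_add_iff 1).2 this
      refine this.congr fun n => by push_cast; ring
    have hsum : (∑' k, P (Sset k)) ≠ ⊤ := by
      have h1 : (∑' k, P (Sset k)) ≤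
          ∑' k : ℕ, ENNReal.ofReal (M ^ 2 / δ ^ 2 * (1 / ((k : ℝ) + 1) ^ 2)) :=
        ENNReal.tsum_le_tsum hmeasbd
      rw [← ENNReal.ofReal_tsum_of_nonneg (fun k => by positivity) hsummable] at h1
      exact (h1.trans_lt ENNReal.ofReal_lt_top).ne
    filter_upwards [ae_eventually_notMem hsum] with ω hω
    rw [eventually_atTop] at hω ⊢
    obtain ⟨N, hN⟩ := hω
    refine ⟨N + 1, fun k hk => ?_⟩
    obtain ⟨j, rfl⟩ : ∃ j, k = j + 1 := ⟨k - 1, by omega⟩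
    have hmem' := hN j (by omega)
    simp only [hSset, Set.mem_setOf_eq, not_le] at hmem'
    have he : T ((j+1)*(j+1)) ω - P[T ((j+1)*(j+1))]
        = ∑ m ∈ Finset.range ((j+1)*(j+1)), (X m ω - μ m) := by
      rw [hTint]
      simp [hT, Finset.sum_apply, Finset.sum_sub_distrib]
    rw [he] at hmem'
    convert hmem' using 2
    · rfl
    push_cast; ring
  have hbd' : ∀ᵐ ω ∂P, ∀ n, |X n ω| ≤ M := ae_all_iff.2 hbd
  have hkey : ∀ᵐ ω ∂P, ∀ j : ℕ, ∀ᶠ k : ℕ in atTop,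
      |∑ m ∈ Finset.range (k*k), (X m ω - μ m)| < (1/((j:ℝ)+1)) * (k*k) :=
    ae_all_iff.2 fun j => key _ (by positivity)
  filter_upwards [hbd', hkey] with ω hb hk
  rw [Metric.tendsto_atTop]
  intro ε hε
  obtain ⟨j, hj⟩ := exists_nat_one_div_lt (half_pos hε)
  obtain ⟨K1, hK1⟩ := eventually_atTop.1 (hk j)
  obtain ⟨K2, hK2⟩ := exists_nat_gt (6 * M / (ε/2))
  refine ⟨(K1 + K2 + 1) * (K1 + K2 + 1), fun n hn => ?_⟩
  set k := Nat.sqrt n with hkdef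
  have hk2 : k * k ≤ n := Nat.sqrt_le n
  have hk3 : n < (k+1) * (k+1) := Nat.lt_succ_sqrt n
  have hkK : K1 + K2 + 1 ≤ k := by
    calc K1 + K2 + 1 = Nat.sqrt ((K1+K2+1) * (K1+K2+1)) := by
          rw [Nat.sqrt_eq (K1+K2+1)]
      _ ≤ Nat.sqrt n := Nat.sqrt_le_sqrt hn
  have hk1' : 1 ≤ k := by omega
  have hS1 : |∑ m ∈ Finset.range (k*k), (X m ω - μ m)| < (1/((j:ℝ)+1)) * ((k:ℝ) * (k:ℝ)) :=
    hK1 k (by omega)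
  have hterm : ∀ i : ℕ, |X i ω - μ i| ≤ 2 * M := fun i => by
    have h1 := hb i; have h2 := hμbd i
    have := abs_sub (X i ω) (μ i)
    calc |X i ω - μ i| ≤ |X i ω| + |μ i| := abs_sub (X i ω) (μ i)
      _ ≤ 2 * M := by linarith
  have hdiff : |(∑ m ∈ Finset.range n, (X m ω - μ m))
      - ∑ m ∈ Finset.range (k*k), (X m ω - μ m)| ≤ ((n - k*k : ℕ) : ℝ) * (2*M) := by
    rw [← Finset.sum_Ico_eq_sub _ hk2]
    calc |∑ m ∈ Finset.Ico (k*k) n, (X m ω - μ m)|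
        ≤ ∑ m ∈ Finset.Ico (k*k) n, |X m ω - μ m| := Finset.abs_sum_le_sum_abs _ _
      _ ≤ (Finset.Ico (k*k) n).card • (2*M) :=
          Finset.sum_le_card_nsmul _ _ _ (fun i _ => hterm i)
      _ = ((n - k*k : ℕ) : ℝ) * (2*M) := by
          rw [Nat.card_Ico, nsmul_eq_mul]
  have hn0 : (0:ℝ) < n := by
    have : 1 ≤ n := le_trans (Nat.one_le_iff_ne_zero.2 (by positivity)) hn
    exact_mod_cast Nat.lt_of_lt_of_le Nat.zero_lt_one this
  rw [Real.dist_eq, sub_zero, abs_div, Nat.abs_cast, div_lt_iff₀ hn0]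
  have htri : |∑ m ∈ Finset.range n, (X m ω - μ m)|
      ≤ |∑ m ∈ Finset.range (k*k), (X m ω - μ m)|
        + |(∑ m ∈ Finset.range n, (X m ω - μ m))
            - ∑ m ∈ Finset.range (k*k), (X m ω - μ m)| := by
    have := abs_add_le (∑ m ∈ Finset.range (k*k), (X m ω - μ m))
      ((∑ m ∈ Finset.range n, (X m ω - μ m)) - ∑ m ∈ Finset.range (k*k), (X m ω - μ m))
    simpa using this
  have hcard : ((n - k*k : ℕ) : ℝ) ≤ 2 * (k:ℝ) := by
    have h3 : n < k*k + 2*k + 1 := by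
      calc n < (k+1) * (k+1) := hk3
        _ = k*k + 2*k + 1 := by ring
    have : n - k*k ≤ 2 * k := by omega
    exact_mod_cast this
  have hkk : ((k*k : ℕ) : ℝ) = (k:ℝ) * (k:ℝ) := by push_cast; ring
  have hkn : (k:ℝ) * (k:ℝ) ≤ (n:ℝ) := by rw [← hkk]; exact_mod_cast hk2
  have hK2k : (K2 : ℝ) ≤ (k : ℝ) := by exact_mod_cast (by omega : K2 ≤ k)
  have h6M : 6 * M < (ε/2) * (k:ℝ) := by
    have := (div_lt_iff₀ (half_pos hε)).1 (lt_of_lt_of_le hK2 hK2k)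
    linarith
  have hk1r : (1:ℝ) ≤ (k:ℝ) := by exact_mod_cast hk1'
  have hn1 : (1:ℝ) ≤ (n:ℝ) := by nlinarith
  have hjpos : (0:ℝ) < 1/((j:ℝ)+1) := by positivity
  nlinarith [hS1, hdiff, htri, hcard, hkk, hkn, h6M, hk1r, hn1, hj, hjpos, hM,
    mul_le_mul_of_nonneg_left hkn (le_of_lt hjpos),
    mul_le_mul_of_nonneg_right h6M.le (by positivity : (0:ℝ) ≤ (k:ℝ)),
    mul_lt_mul_of_pos_right hj hn0]


/-- **Example 11, part 1** (sufficient condition for ε-unbiased payoff observations).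
If the payoffs `s (n)` and weights `w (n)` (here `s n`, `w n` stand for `s(n+1)`,
`w(n+1)`, `n+1 = 1, 2, …`) form a mutually independent family, `s n ∈ [0,1]` and
`w n ∈ [1,C]` almost surely, and `E[|s n − v|] ≤ ε/2` for all `n`, then almost surely
`limsup_n |s̄(n) − s̃(n)| ≤ ε`, where `s̄` is the arithmetic and `s̃` the weighted
average. -/
theorem stmt_10 {Ω : Type*} [MeasurableSpace Ω] (P : Measure Ω) [IsProbabilityMeasure P]
    (C v ε : ℝ) (hC : 1 ≤ C) (hv : v ∈ Set.Icc (0 : ℝ) 1) (hε : 0 < ε)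
    (s w : ℕ → Ω → ℝ)
    (hs_meas : ∀ n, Measurable (s n)) (hw_meas : ∀ n, Measurable (w n))
    (hindep : iIndepFun (Sum.elim s w) P)
    (hs : ∀ n, ∀ᵐ ω ∂P, s n ω ∈ Set.Icc (0 : ℝ) 1)
    (hw : ∀ n, ∀ᵐ ω ∂P, w n ω ∈ Set.Icc (1 : ℝ) C)
    (hE : ∀ n, ∫ ω, |s n ω - v| ∂P ≤ ε / 2) :
    ∀ᵐ ω ∂P, limsup (fun n : ℕ =>
      |(∑ m ∈ Finset.range n, s m ω) / n
        - (∑ m ∈ Finset.range n, w m ω * s m ω) / (∑ m ∈ Finset.range n, w m ω)|)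
      atTop ≤ ε := by
  obtain ⟨hv0, hv1⟩ := hv
  have hεC : 0 < ε / 2 := half_pos hε
  have hfmeas : ∀ x : ℕ ⊕ ℕ, Measurable (Sum.elim s w x) := fun x =>
    match x with
    | .inl i => hs_meas i
    | .inr i => hw_meas i
  -- independence facts
  have hss : ∀ i j, i ≠ j →
      IndepFun (fun ω => |s i ω - v|) (fun ω => |s j ω - v|) P := by
    intro i j hij
    have h := hindep.indepFun (show (Sum.inl i : ℕ ⊕ ℕ) ≠ Sum.inl j by simpa using hij)
    exact h.comp (measurable_id.sub_const v).abs (measurable_id.sub_const v).abs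
  have hww : ∀ i j, i ≠ j → IndepFun (w i) (w j) P := fun i j hij =>
    hindep.indepFun (show (Sum.inr i : ℕ ⊕ ℕ) ≠ Sum.inr j by simpa using hij)
  have hprodmeas : Measurable (fun p : ℝ × ℝ => p.2 * (p.1 - v)) :=
    measurable_snd.mul (measurable_fst.sub measurable_const)
  have hwbI : ∀ i j, i ≠ j → IndepFun (fun ω => w i ω * (s i ω - v))
      (fun ω => w j ω * (s j ω - v)) P := by
    intro i j hij
    have h := hindep.indepFun_prodMk_prodMk hfmeas (Sum.inl i) (Sum.inr i)
      (Sum.inl j) (Sum.inr j) (by simpa using hij) (by simp) (by simp) (by simpa using hij)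
    exact h.comp hprodmeas hprodmeas
  have hsw : ∀ i, IndepFun (w i) (fun ω => s i ω - v) P := fun i => by
    have h := hindep.indepFun (show (Sum.inr i : ℕ ⊕ ℕ) ≠ Sum.inl i by simp)
    exact h.comp measurable_id (measurable_id.sub_const v)
  -- boundedness facts
  have hbs : ∀ i, ∀ᵐ ω ∂P, |s i ω - v| ≤ 1 := fun i => (hs i).mono fun ω h => by
    rw [abs_le]; constructor <;> [linarith [h.1]; linarith [h.2]]
  have hbw : ∀ i, ∀ᵐ ω ∂P, |w i ω| ≤ C := fun i => (hw i).mono fun ω h =>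
    abs_le.2 ⟨by linarith [h.1], h.2⟩
  have hbwb : ∀ i, ∀ᵐ ω ∂P, |w i ω * (s i ω - v)| ≤ C := fun i => by
    filter_upwards [hbs i, hbw i] with ω h1 h2
    calc |w i ω * (s i ω - v)| = |w i ω| * |s i ω - v| := abs_mul _ _
      _ ≤ C * 1 := mul_le_mul h2 h1 (abs_nonneg _) (le_trans zero_le_one hC)
      _ = C := mul_one C
  -- integrability
  have hIbd : ∀ (f : Ω → ℝ) (c : ℝ), Measurable f → (∀ᵐ ω ∂P, |f ω| ≤ c) →
      Integrable f P := fun f c hf hc =>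
    memLp_one_iff_integrable.mp (MemLp.of_bound hf.aestronglyMeasurable c
      (hc.mono fun ω h => by simpa [Real.norm_eq_abs] using h))
  have hIb : ∀ i, Integrable (fun ω => s i ω - v) P := fun i =>
    hIbd _ 1 ((hs_meas i).sub_const v) (hbs i)
  have hIw : ∀ i, Integrable (w i) P := fun i => hIbd _ C (hw_meas i) (hbw i)
  -- integral bounds
  have hEb : ∀ i, |∫ ω, (s i ω - v) ∂P| ≤ ε / 2 := fun i => by
    refine le_trans ?_ (hE i)
    simpa [Real.norm_eq_abs] using norm_integral_le_integral_norm (μ := P) (fun ω => s i ω - v)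
  have hEw1 : ∀ i, 1 ≤ ∫ ω, w i ω ∂P := fun i => by
    have := integral_mono_ae (integrable_const 1) (hIw i) ((hw i).mono fun ω h => h.1)
    simpa using this
  have hμ2bd : ∀ i, |∫ ω, w i ω * (s i ω - v) ∂P| ≤ (ε / 2) * ∫ ω, w i ω ∂P := fun i => by
    have heq : (∫ ω, w i ω * (s i ω - v) ∂P)
        = (∫ ω, w i ω ∂P) * ∫ ω, (s i ω - v) ∂P :=
      (hsw i).integral_fun_mul_eq_mul_integral (hIw i).aestronglyMeasurable (hIb i).aestronglyMeasurable
    rw [heq, abs_mul, abs_of_nonneg (le_trans zero_le_one (hEw1 i))]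
    calc (∫ ω, w i ω ∂P) * |∫ ω, (s i ω - v) ∂P| ≤ (∫ ω, w i ω ∂P) * (ε / 2) :=
          mul_le_mul_of_nonneg_left (hEb i) (by linarith [hEw1 i])
      _ = (ε / 2) * ∫ ω, w i ω ∂P := mul_comm _ _
  -- strong laws
  have slln1 := slln_bdd P (fun i ω => |s i ω - v|) 1
    (fun i => ((hs_meas i).sub_const v).abs) hss
    (fun i => (hbs i).mono fun ω h => by rwa [abs_abs])
  have slln2 := slln_bdd P (fun i ω => w i ω * (s i ω - v)) C
    (fun i => (hw_meas i).mul ((hs_meas i).sub_const v)) hwbI hbwb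
  have slln3 := slln_bdd P w C hw_meas hww hbw
  filter_upwards [slln1, slln2, slln3, ae_all_iff.2 hs, ae_all_iff.2 hw]
    with ω h1 h2 h3 hsω hwω
  set A : ℕ → ℝ := fun n =>
    (∑ m ∈ Finset.range n, (|s m ω - v| - ∫ ω', |s m ω' - v| ∂P)) / n with hA
  set B : ℕ → ℝ := fun n =>
    (∑ m ∈ Finset.range n, (w m ω * (s m ω - v) - ∫ ω', w m ω' * (s m ω' - v) ∂P)) / n with hB
  set W : ℕ → ℝ := fun n =>
    (∑ m ∈ Finset.range n, (w m ω - ∫ ω', w m ω' ∂P)) / n with hW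
  set g : ℕ → ℝ := fun n => (A n + ε / 2) + ((|B n| + (ε / 2) * |W n|) + ε / 2) with hg
  have hgt : Tendsto g atTop (𝓝 ((0 + ε / 2) + ((|(0:ℝ)| + (ε / 2) * |(0:ℝ)|) + ε / 2))) := by
    exact (h1.add_const _).add (((h2.abs.add ((h3.abs).const_mul (ε / 2)))).add_const _)
  rw [show (0 + ε / 2) + ((|(0:ℝ)| + (ε / 2) * |(0:ℝ)|) + ε / 2) = ε by simp] at hgt
  have hfg : ∀ᶠ n : ℕ in atTop,
      |(∑ m ∈ Finset.range n, s m ω) / n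
        - (∑ m ∈ Finset.range n, w m ω * s m ω) / (∑ m ∈ Finset.range n, w m ω)| ≤ g n := by
    filter_upwards [eventually_ge_atTop 1] with n hn
    have hn0 : (0:ℝ) < n := by exact_mod_cast Nat.lt_of_lt_of_le Nat.zero_lt_one hn
    have hSw : (n:ℝ) ≤ ∑ m ∈ Finset.range n, w m ω := by
      calc (n:ℝ) = ∑ _m ∈ Finset.range n, (1:ℝ) := by simp
        _ ≤ ∑ m ∈ Finset.range n, w m ω := Finset.sum_le_sum fun i _ => (hwω i).1
    have hSw0 : (0:ℝ) < ∑ m ∈ Finset.range n, w m ω := lt_of_lt_of_le hn0 hSw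
    have e1 : (∑ m ∈ Finset.range n, (s m ω - v)) / n
        = (∑ m ∈ Finset.range n, s m ω) / n - v := by
      rw [Finset.sum_sub_distrib, Finset.sum_const, Finset.card_range, sub_div,
        nsmul_eq_mul, mul_div_cancel_left₀ _ hn0.ne']
    have e2 : (∑ m ∈ Finset.range n, w m ω * (s m ω - v)) / (∑ m ∈ Finset.range n, w m ω)
        = (∑ m ∈ Finset.range n, w m ω * s m ω) / (∑ m ∈ Finset.range n, w m ω) - v := by
      have : ∑ m ∈ Finset.range n, w m ω * (s m ω - v)
          = (∑ m ∈ Finset.range n, w m ω * s m ω) - (∑ m ∈ Finset.range n, w m ω) * v := by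
        rw [Finset.sum_mul]
        rw [← Finset.sum_sub_distrib]
        exact Finset.sum_congr rfl fun i _ => by ring
      rw [this, sub_div, mul_comm, mul_div_assoc, div_self hSw0.ne', mul_one]
    have key1 : |(∑ m ∈ Finset.range n, s m ω) / n - v| ≤ A n + ε / 2 := by
      rw [← e1, abs_div, Nat.abs_cast, div_le_iff₀ hn0]
      have hAn : A n * n = (∑ m ∈ Finset.range n, |s m ω - v|)
          - ∑ m ∈ Finset.range n, ∫ ω', |s m ω' - v| ∂P := by
        rw [hA]
        rw [div_mul_cancel₀ _ hn0.ne', Finset.sum_sub_distrib]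
      have hsum1 : ∑ m ∈ Finset.range n, ∫ ω', |s m ω' - v| ∂P ≤ (n:ℝ) * (ε / 2) := by
        calc ∑ m ∈ Finset.range n, ∫ ω', |s m ω' - v| ∂P
            ≤ ∑ _m ∈ Finset.range n, (ε / 2) := Finset.sum_le_sum fun i _ => hE i
          _ = (n:ℝ) * (ε / 2) := by simp [mul_comm]
      have habs : |∑ m ∈ Finset.range n, (s m ω - v)|
          ≤ ∑ m ∈ Finset.range n, |s m ω - v| := Finset.abs_sum_le_sum_abs _ _
      nlinarith [habs, hAn, hsum1]
    have key2 : |(∑ m ∈ Finset.range n, w m ω * s m ω) / (∑ m ∈ Finset.range n, w m ω) - v|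
        ≤ |B n| + (ε / 2) * |W n| + ε / 2 := by
      rw [← e2, abs_div, abs_of_pos hSw0, div_le_iff₀ hSw0]
      have hBn : |B n| * n = |∑ m ∈ Finset.range n,
          (w m ω * (s m ω - v) - ∫ ω', w m ω' * (s m ω' - v) ∂P)| := by
        rw [hB, abs_div, Nat.abs_cast, div_mul_cancel₀ _ hn0.ne']
      have hWn : |W n| * n = |∑ m ∈ Finset.range n, (w m ω - ∫ ω', w m ω' ∂P)| := by
        rw [hW, abs_div, Nat.abs_cast, div_mul_cancel₀ _ hn0.ne']
      have hdecomp : ∑ m ∈ Finset.range n, w m ω * (s m ω - v)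
          = (∑ m ∈ Finset.range n,
              (w m ω * (s m ω - v) - ∫ ω', w m ω' * (s m ω' - v) ∂P))
            + ∑ m ∈ Finset.range n, ∫ ω', w m ω' * (s m ω' - v) ∂P := by
        rw [← Finset.sum_add_distrib]
        exact Finset.sum_congr rfl fun i _ => by ring
      have h1' : |∑ m ∈ Finset.range n, w m ω * (s m ω - v)|
          ≤ |B n| * n + |∑ m ∈ Finset.range n, ∫ ω', w m ω' * (s m ω' - v) ∂P| := by
        rw [hBn, hdecomp]; exact abs_add_le _ _
      have h2' : |∑ m ∈ Finset.range n, ∫ ω', w m ω' * (s m ω' - v) ∂P|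
          ≤ (ε / 2) * ∑ m ∈ Finset.range n, ∫ ω', w m ω' ∂P := by
        calc |∑ m ∈ Finset.range n, ∫ ω', w m ω' * (s m ω' - v) ∂P|
            ≤ ∑ m ∈ Finset.range n, |∫ ω', w m ω' * (s m ω' - v) ∂P| :=
              Finset.abs_sum_le_sum_abs _ _
          _ ≤ ∑ m ∈ Finset.range n, (ε / 2) * ∫ ω', w m ω' ∂P :=
              Finset.sum_le_sum fun i _ => hμ2bd i
          _ = (ε / 2) * ∑ m ∈ Finset.range n, ∫ ω', w m ω' ∂P := by
              rw [Finset.mul_sum]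
      have h3' : ∑ m ∈ Finset.range n, ∫ ω', w m ω' ∂P
          ≤ (∑ m ∈ Finset.range n, w m ω) + |W n| * n := by
        have hd : ∑ m ∈ Finset.range n, (w m ω - ∫ ω', w m ω' ∂P)
            = (∑ m ∈ Finset.range n, w m ω) - ∑ m ∈ Finset.range n, ∫ ω', w m ω' ∂P :=
          Finset.sum_sub_distrib _ _
        have hneg := neg_abs_le (∑ m ∈ Finset.range n, (w m ω - ∫ ω', w m ω' ∂P))
        rw [hd] at hneg
        rw [hWn, hd]
        linarith
      have hBpos := abs_nonneg (B n)
      have hWpos := abs_nonneg (W n)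
      nlinarith [h1', h2', h3', hSw, hBpos, hWpos, hεC,
        mul_le_mul_of_nonneg_left hSw hBpos,
        mul_le_mul_of_nonneg_left hSw (mul_nonneg (le_of_lt hεC) hWpos)]
    calc |(∑ m ∈ Finset.range n, s m ω) / n
        - (∑ m ∈ Finset.range n, w m ω * s m ω) / (∑ m ∈ Finset.range n, w m ω)|
        = |((∑ m ∈ Finset.range n, s m ω) / n - v)
          - ((∑ m ∈ Finset.range n, w m ω * s m ω) / (∑ m ∈ Finset.range n, w m ω) - v)| := by
          congr 1; ring
      _ ≤ |(∑ m ∈ Finset.range n, s m ω) / n - v|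
          + |(∑ m ∈ Finset.range n, w m ω * s m ω) / (∑ m ∈ Finset.range n, w m ω) - v| :=
          abs_sub _ _
      _ ≤ (A n + ε / 2) + (|B n| + (ε / 2) * |W n| + ε / 2) := add_le_add key1 key2
      _ = g n := by rw [hg]
  calc limsup (fun n : ℕ =>
      |(∑ m ∈ Finset.range n, s m ω) / n
        - (∑ m ∈ Finset.range n, w m ω * s m ω) / (∑ m ∈ Finset.range n, w m ω)|) atTop
      ≤ limsup g atTop :=
        limsup_le_limsup hfg
          (isCoboundedUnder_le_of_le atTop fun n => abs_nonneg _)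
          hgt.isBoundedUnder_le
    _ = ε := hgt.limsup_eq
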